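/- Let λ > 0, V = λI + ΦᵀWΦ for Φ ∈ R^{s×n} and W diagonal positive definite, and let θ*, ζ ∈ appropriate spaces with Y = Φθ* + ζ and θ̂ = V^{-1}ΦᵀWY. Then for any x ∈ R^n, xᵀθ̂ − xᵀθ* = ⟨x, ΦᵀWζ⟩_{V^{-1}} − λ⟨x, θ*⟩_{V^{-1}}, and hence |xᵀθ̂ − xᵀθ*| ≤ ‖x‖_{V^{-1}}·(‖ΦᵀWζ‖_{V^{-1}} + √λ·‖θ*‖₂). -/

import Mathlib

open Matrix

private lemma psd_cs {n : ℕ} {M : Matrix (Fin n) (Fin n) ℝ} (hM : M.PosSemidef)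
    (x y : Fin n → ℝ) :
    (x ⬝ᵥ M *ᵥ y) ^ 2 ≤ (x ⬝ᵥ M *ᵥ x) * (y ⬝ᵥ M *ᵥ y) := by
  have hMt : Mᵀ = M := by
    have h := hM.1
    rw [Matrix.IsHermitian] at h
    simpa [conjTranspose_eq_transpose_of_trivial] using h
  have hsym : ∀ u v : Fin n → ℝ, u ⬝ᵥ M *ᵥ v = v ⬝ᵥ M *ᵥ u := by
    intro u v
    rw [dotProduct_mulVec]
    have h2 : u ᵥ* M = Mᵀ *ᵥ u := (Matrix.mulVec_transpose M u).symm
    rw [h2, hMt, dotProduct_comm]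
  have key : ∀ t : ℝ, 0 ≤ (y ⬝ᵥ M *ᵥ y) * (t * t) + (2 * (x ⬝ᵥ M *ᵥ y)) * t + (x ⬝ᵥ M *ᵥ x) := by
    intro t
    have h0 := hM.dotProduct_mulVec_nonneg (x + t • y)
    simp only [star_trivial] at h0
    have hexp : (x + t • y) ⬝ᵥ M *ᵥ (x + t • y)
        = (y ⬝ᵥ M *ᵥ y) * (t * t) + (2 * (x ⬝ᵥ M *ᵥ y)) * t + (x ⬝ᵥ M *ᵥ x) := by
      simp only [mulVec_add, mulVec_smul, add_dotProduct, smul_dotProduct, dotProduct_add,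
        dotProduct_smul, smul_eq_mul, hsym y x]
      ring
    linarith [hexp ▸ h0]
  have hd := discrim_le_zero key
  rw [discrim] at hd
  nlinarith [hd]

private lemma psd_cs_abs {n : ℕ} {M : Matrix (Fin n) (Fin n) ℝ} (hM : M.PosSemidef)
    (x y : Fin n → ℝ) :
    |x ⬝ᵥ M *ᵥ y| ≤ Real.sqrt (x ⬝ᵥ M *ᵥ x) * Real.sqrt (y ⬝ᵥ M *ᵥ y) := by
  have h1 : 0 ≤ x ⬝ᵥ M *ᵥ x := by simpa using hM.dotProduct_mulVec_nonneg x
  have h2 : 0 ≤ y ⬝ᵥ M *ᵥ y := by simpa using hM.dotProduct_mulVec_nonneg y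
  have := psd_cs hM x y
  calc |x ⬝ᵥ M *ᵥ y| = Real.sqrt ((x ⬝ᵥ M *ᵥ y) ^ 2) := (Real.sqrt_sq_eq_abs _).symm
    _ ≤ Real.sqrt ((x ⬝ᵥ M *ᵥ x) * (y ⬝ᵥ M *ᵥ y)) := Real.sqrt_le_sqrt this
    _ = Real.sqrt (x ⬝ᵥ M *ᵥ x) * Real.sqrt (y ⬝ᵥ M *ᵥ y) := Real.sqrt_mul h1 _

theorem stmt_17 (s n : ℕ) (lam : ℝ) (hlam : 0 < lam)
    (Φ : Matrix (Fin s) (Fin n) ℝ) (w : Fin s → ℝ) (hw : ∀ i, 0 < w i)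
    (θstar : Fin n → ℝ) (ζ : Fin s → ℝ) (x : Fin n → ℝ)
    (V : Matrix (Fin n) (Fin n) ℝ)
    (hV : V = lam • (1 : Matrix (Fin n) (Fin n) ℝ) +
      Φ.transpose * Matrix.diagonal w * Φ)
    (Y : Fin s → ℝ) (hY : Y = Φ *ᵥ θstar + ζ)
    (θhat : Fin n → ℝ)
    (hθ : θhat = V⁻¹ *ᵥ (Φ.transpose * Matrix.diagonal w) *ᵥ Y) :
    x ⬝ᵥ θhat - x ⬝ᵥ θstar
      = x ⬝ᵥ V⁻¹ *ᵥ ((Φ.transpose * Matrix.diagonal w) *ᵥ ζ)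
        - lam * (x ⬝ᵥ V⁻¹ *ᵥ θstar) ∧
    |x ⬝ᵥ θhat - x ⬝ᵥ θstar|
      ≤ Real.sqrt (x ⬝ᵥ V⁻¹ *ᵥ x) *
        (Real.sqrt (((Φ.transpose * Matrix.diagonal w) *ᵥ ζ) ⬝ᵥ
            V⁻¹ *ᵥ ((Φ.transpose * Matrix.diagonal w) *ᵥ ζ)) +
          Real.sqrt lam * Real.sqrt (θstar ⬝ᵥ θstar)) := by
  -- positive definiteness
  have hWpsd : (Matrix.diagonal w).PosSemidef :=
    Matrix.PosSemidef.diagonal (fun i => (hw i).le)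
  have hGram : (Φ.transpose * Matrix.diagonal w * Φ).PosSemidef := by
    have := hWpsd.conjTranspose_mul_mul_same Φ
    simpa [conjTranspose_eq_transpose_of_trivial] using this
  have hId : (lam • (1 : Matrix (Fin n) (Fin n) ℝ)).PosDef := by
    rw [smul_one_eq_diagonal]
    exact Matrix.PosDef.diagonal (fun i => hlam)
  have hVpd : V.PosDef := by
    rw [hV]; exact hId.add_posSemidef hGram
  have hVinv : V⁻¹.PosDef := hVpd.inv
  have hVunit : IsUnit V.det := isUnit_iff_ne_zero.mpr (ne_of_gt hVpd.det_pos)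
  have hVinvV : V⁻¹ * V = 1 := Matrix.nonsing_inv_mul V hVunit
  set A := Φ.transpose * Matrix.diagonal w with hA
  set z := A *ᵥ ζ with hz
  -- the identity
  have hid : x ⬝ᵥ θhat - x ⬝ᵥ θstar
      = x ⬝ᵥ V⁻¹ *ᵥ z - lam * (x ⬝ᵥ V⁻¹ *ᵥ θstar) := by
    have hθ' : θhat = θstar - lam • (V⁻¹ *ᵥ θstar) + V⁻¹ *ᵥ z := by
      rw [hθ, hY]
      have h1 : A *ᵥ (Φ *ᵥ θstar + ζ) = (A * Φ) *ᵥ θstar + z := by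
        rw [mulVec_add, mulVec_mulVec, hz]
      have h2 : A * Φ = V - lam • (1 : Matrix (Fin n) (Fin n) ℝ) := by
        rw [hV, hA]; abel
      rw [h1, h2, Matrix.sub_mulVec, smul_mulVec, one_mulVec,
        mulVec_add, mulVec_sub, mulVec_smul, mulVec_mulVec, hVinvV, one_mulVec]
    rw [hθ']
    rw [dotProduct_add, dotProduct_sub, dotProduct_smul, smul_eq_mul]
    ring
  refine ⟨hid, ?_⟩
  -- bounds
  have hb1 : |x ⬝ᵥ V⁻¹ *ᵥ z| ≤ Real.sqrt (x ⬝ᵥ V⁻¹ *ᵥ x) * Real.sqrt (z ⬝ᵥ V⁻¹ *ᵥ z) :=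
    psd_cs_abs hVinv.posSemidef x z
  have hb2 : |x ⬝ᵥ V⁻¹ *ᵥ θstar|
      ≤ Real.sqrt (x ⬝ᵥ V⁻¹ *ᵥ x) * Real.sqrt (θstar ⬝ᵥ V⁻¹ *ᵥ θstar) :=
    psd_cs_abs hVinv.posSemidef x θstar
  have hthnn : 0 ≤ θstar ⬝ᵥ θstar := by
    have := (Matrix.PosSemidef.one (n := Fin n) (R := ℝ)).dotProduct_mulVec_nonneg θstar
    simpa using this
  -- θstar ⬝ V⁻¹ θstar ≤ (θstar ⬝ θstar) / lam
  have hkey : θstar ⬝ᵥ V⁻¹ *ᵥ θstar ≤ (θstar ⬝ᵥ θstar) / lam := by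
    set u := V⁻¹ *ᵥ θstar with hu
    have hVu : V *ᵥ u = θstar := by
      rw [hu, mulVec_mulVec, Matrix.mul_nonsing_inv V hVunit, one_mulVec]
    have hlow : lam * (u ⬝ᵥ u) ≤ θstar ⬝ᵥ u := by
      have : θstar ⬝ᵥ u = u ⬝ᵥ V *ᵥ u := by
        rw [hVu]
        exact dotProduct_comm _ _
      rw [this, hV, Matrix.add_mulVec, dotProduct_add, smul_mulVec, one_mulVec,
        dotProduct_smul]
      have := hGram.dotProduct_mulVec_nonneg u
      simp only [star_trivial] at this
      simp only [smul_eq_mul]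
      linarith
    have hcs : (θstar ⬝ᵥ u) ^ 2 ≤ (θstar ⬝ᵥ θstar) * (u ⬝ᵥ u) := by
      have := psd_cs (Matrix.PosSemidef.one (n := Fin n) (R := ℝ)) θstar u
      simpa using this
    have hnn : 0 ≤ θstar ⬝ᵥ u := by
      have := hVinv.posSemidef.dotProduct_mulVec_nonneg θstar
      simpa [hu] using this
    have huu : 0 ≤ u ⬝ᵥ u := by
      have := (Matrix.PosSemidef.one (n := Fin n) (R := ℝ)).dotProduct_mulVec_nonneg u
      simpa using this
    rcases eq_or_lt_of_le hnn with h | h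
    · rw [← h]
      positivity
    · rw [le_div_iff₀ hlam]
      nlinarith
  have hsq : Real.sqrt (θstar ⬝ᵥ V⁻¹ *ᵥ θstar)
      ≤ Real.sqrt (θstar ⬝ᵥ θstar) / Real.sqrt lam := by
    rw [← Real.sqrt_div hthnn]
    exact Real.sqrt_le_sqrt hkey
  have hxnn : 0 ≤ Real.sqrt (x ⬝ᵥ V⁻¹ *ᵥ x) := Real.sqrt_nonneg _
  have habs : |x ⬝ᵥ θhat - x ⬝ᵥ θstar| ≤ |x ⬝ᵥ V⁻¹ *ᵥ z| + lam * |x ⬝ᵥ V⁻¹ *ᵥ θstar| := by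
    rw [hid]
    calc |x ⬝ᵥ V⁻¹ *ᵥ z - lam * (x ⬝ᵥ V⁻¹ *ᵥ θstar)|
        ≤ |x ⬝ᵥ V⁻¹ *ᵥ z| + |lam * (x ⬝ᵥ V⁻¹ *ᵥ θstar)| := abs_sub _ _
      _ = |x ⬝ᵥ V⁻¹ *ᵥ z| + lam * |x ⬝ᵥ V⁻¹ *ᵥ θstar| := by
          rw [abs_mul, abs_of_pos hlam]
  have hlamsqrt : lam * (Real.sqrt (θstar ⬝ᵥ θstar) / Real.sqrt lam)
      = Real.sqrt lam * Real.sqrt (θstar ⬝ᵥ θstar) := by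
    have hs0 : (Real.sqrt lam) ≠ 0 := by positivity
    have hs : Real.sqrt lam * Real.sqrt lam = lam := Real.mul_self_sqrt hlam.le
    field_simp
    linear_combination (-Real.sqrt (θstar ⬝ᵥ θstar)) * hs
  calc |x ⬝ᵥ θhat - x ⬝ᵥ θstar|
      ≤ |x ⬝ᵥ V⁻¹ *ᵥ z| + lam * |x ⬝ᵥ V⁻¹ *ᵥ θstar| := habs
    _ ≤ Real.sqrt (x ⬝ᵥ V⁻¹ *ᵥ x) * Real.sqrt (z ⬝ᵥ V⁻¹ *ᵥ z)
        + lam * (Real.sqrt (x ⬝ᵥ V⁻¹ *ᵥ x) * Real.sqrt (θstar ⬝ᵥ V⁻¹ *ᵥ θstar)) := by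
        have := mul_le_mul_of_nonneg_left hb2 hlam.le
        linarith
    _ ≤ Real.sqrt (x ⬝ᵥ V⁻¹ *ᵥ x) * Real.sqrt (z ⬝ᵥ V⁻¹ *ᵥ z)
        + lam * (Real.sqrt (x ⬝ᵥ V⁻¹ *ᵥ x) * (Real.sqrt (θstar ⬝ᵥ θstar) / Real.sqrt lam)) := by
        have h := mul_le_mul_of_nonneg_left hsq hxnn
        nlinarith [h, hlam.le]
    _ = Real.sqrt (x ⬝ᵥ V⁻¹ *ᵥ x) *
        (Real.sqrt (z ⬝ᵥ V⁻¹ *ᵥ z) + Real.sqrt lam * Real.sqrt (θstar ⬝ᵥ θstar)) := by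
        rw [mul_add]
        congr 1
        rw [← hlamsqrt]
        ring
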